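/- For any partition (A, B, W) of V = {0,1}^n there exists a partition (A′, B′, W′) of V such that |A′| = |A|, |B′| = |B|, |W′| = |W|; A′ is increasing and B′ is decreasing; and |∇_i(A′,B′)| ≤ |∇_i(A,B)| for every coordinate i ∈ [n]. -/
import Mathlib

open Finset

def flipC {n : ℕ} (x : Fin n → Bool) (i : Fin n) : Fin n → Bool :=
  Function.update x i (!x i)

/-- `∇ᵢ(A,B)`: the number of pairs `(x, xⁱ)` with `x ∈ A` and `xⁱ ∈ B`. -/
def nablaI {n : ℕ} (i : Fin n) (A B : Finset (Fin n → Bool)) : ℕ :=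
  (A.filter (fun x => flipC x i ∈ B)).card

def IncreasingSet {n : ℕ} (A : Finset (Fin n → Bool)) : Prop :=
  ∀ x ∈ A, ∀ y : Fin n → Bool, x ≤ y → y ∈ A

def DecreasingSet {n : ℕ} (A : Finset (Fin n → Bool)) : Prop :=
  ∀ x ∈ A, ∀ y : Fin n → Bool, y ≤ x → y ∈ A

namespace Shifting

variable {n : ℕ}

@[simp] lemma flipC_same (x : Fin n → Bool) (j : Fin n) : flipC x j j = !x j := by
  simp [flipC]

lemma flipC_ne (x : Fin n → Bool) {i j : Fin n} (h : i ≠ j) : flipC x j i = x i := by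
  simp [flipC, Function.update_apply, h]

@[simp] lemma flipC_flipC (x : Fin n → Bool) (j : Fin n) : flipC (flipC x j) j = x := by
  funext i
  by_cases h : i = j
  · subst h; simp [flipC]
  · simp [flipC, Function.update_apply, h]

lemma flipC_comm (x : Fin n → Bool) {i j : Fin n} (h : i ≠ j) :
    flipC (flipC x i) j = flipC (flipC x j) i := by
  funext k
  simp only [flipC, Function.update_apply]
  by_cases hk : k = j <;> by_cases hk' : k = i <;> simp_all

lemma pair_sum_gen (i : Fin n) (p : (Fin n → Bool) → Prop) [DecidablePred p]
    (hp : ∀ x, p (flipC x i) ↔ p x) (f : (Fin n → Bool) → ℕ) :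
    ∑ x ∈ univ.filter p, f x
      = ∑ x ∈ univ.filter (fun x => p x ∧ x i = true), (f x + f (flipC x i)) := by
  classical
  have hsplit := Finset.sum_filter_add_sum_filter_not (univ.filter p) (fun x => x i = true) f
  rw [← hsplit, Finset.sum_add_distrib, Finset.filter_filter]
  congr 1
  rw [Finset.filter_filter]
  refine Finset.sum_nbij' (i := fun x => flipC x i) (j := fun x => flipC x i) ?_ ?_ ?_ ?_ ?_
  · intro a ha
    simp only [mem_filter, mem_univ, true_and] at ha ⊢
    rcases ha with ⟨hpa, hai⟩
    refine ⟨(hp a).mpr hpa, ?_⟩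
    simp [Bool.not_eq_true] at hai ⊢
    simp [hai]
  · intro a ha
    simp only [mem_filter, mem_univ, true_and] at ha ⊢
    rcases ha with ⟨hpa, hai⟩
    refine ⟨(hp a).mpr hpa, ?_⟩
    simp [hai]
  · intro a _; simp
  · intro a _; simp
  · intro a _; rw [flipC_flipC]

lemma pair_sum (i : Fin n) (f : (Fin n → Bool) → ℕ) :
    ∑ x, f x = ∑ x ∈ univ.filter (fun x => x i = true), (f x + f (flipC x i)) := by
  have := pair_sum_gen i (fun _ => True) (fun _ => Iff.rfl) f
  simpa using this

lemma quad_sum {i j : Fin n} (hij : i ≠ j) (f : (Fin n → Bool) → ℕ) :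
    ∑ x, f x = ∑ x ∈ univ.filter (fun x => x j = true ∧ x i = true),
      ((f x + f (flipC x j)) + (f (flipC x i) + f (flipC (flipC x i) j))) := by
  rw [pair_sum j f]
  exact pair_sum_gen i (fun x => x j = true)
    (fun x => by simp only [flipC_ne x (Ne.symm hij)]) (fun x => f x + f (flipC x j))

def shiftL (j : Fin n) (ℓ : (Fin n → Bool) → Fin 3) : (Fin n → Bool) → Fin 3 :=
  fun x => if x j = true then max (ℓ x) (ℓ (flipC x j)) else min (ℓ x) (ℓ (flipC x j))

def fib (v : Fin 3) (ℓ : (Fin n → Bool) → Fin 3) : ℕ := (univ.filter (fun x => ℓ x = v)).card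

def Nb (i : Fin n) (ℓ : (Fin n → Bool) → Fin 3) : ℕ :=
  (univ.filter (fun x => ℓ x = 2 ∧ ℓ (flipC x i) = 0)).card

def wt (x : Fin n → Bool) : ℕ := (univ.filter (fun i => x i = true)).card

noncomputable def Φ (ℓ : (Fin n → Bool) → Fin 3) : ℕ := ∑ x, (ℓ x).val * wt x

lemma shiftL_eval_true {j : Fin n} {x} (h : x j = true) (ℓ : (Fin n → Bool) → Fin 3) :
    shiftL j ℓ x = max (ℓ x) (ℓ (flipC x j)) := by simp [shiftL, h]

lemma shiftL_eval_flip {j : Fin n} {x} (h : x j = true) (ℓ : (Fin n → Bool) → Fin 3) :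
    shiftL j ℓ (flipC x j) = min (ℓ x) (ℓ (flipC x j)) := by
  simp [shiftL, h, min_comm]

lemma card_as_sum (p : (Fin n → Bool) → Prop) [DecidablePred p] :
    (univ.filter p).card = ∑ x : Fin n → Bool, (if p x then 1 else 0) := by
  rw [Finset.card_filter]

lemma fib_shift (j : Fin n) (ℓ : (Fin n → Bool) → Fin 3) (v : Fin 3) :
    fib v (shiftL j ℓ) = fib v ℓ := by
  unfold fib
  rw [card_as_sum, card_as_sum, pair_sum j, pair_sum j]
  apply Finset.sum_congr rfl
  intro x hx
  simp only [mem_filter, mem_univ, true_and] at hx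
  rw [shiftL_eval_true hx, shiftL_eval_flip hx]
  have key : ∀ v a b : Fin 3, (if max a b = v then (1:ℕ) else 0) + (if min a b = v then 1 else 0)
      = (if a = v then 1 else 0) + (if b = v then 1 else 0) := by decide
  exact key v _ _

lemma Nb_shift (i j : Fin n) (ℓ : (Fin n → Bool) → Fin 3) :
    Nb i (shiftL j ℓ) ≤ Nb i ℓ := by
  classical
  by_cases hij : i = j
  · subst hij
    unfold Nb
    rw [card_as_sum, card_as_sum, pair_sum i, pair_sum i]
    apply Finset.sum_le_sum
    intro x hx
    simp only [mem_filter, mem_univ, true_and] at hx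
    rw [flipC_flipC, shiftL_eval_true hx, shiftL_eval_flip hx]
    have key : ∀ a b : Fin 3,
        ((if max a b = 2 ∧ min a b = 0 then (1:ℕ) else 0)
          + (if min a b = 2 ∧ max a b = 0 then 1 else 0))
        ≤ (if a = 2 ∧ b = 0 then 1 else 0) + (if b = 2 ∧ a = 0 then 1 else 0) := by decide
    exact key _ _
  · unfold Nb
    rw [card_as_sum, card_as_sum, quad_sum hij, quad_sum hij]
    apply Finset.sum_le_sum
    intro x hx
    simp only [mem_filter, mem_univ, true_and] at hx
    obtain ⟨hj, hi⟩ := hx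
    have hji : (flipC x i) j = x j := flipC_ne x (Ne.symm hij)
    have e1 : flipC (flipC x j) i = flipC (flipC x i) j := (flipC_comm x hij).symm
    have e2 : flipC (flipC (flipC x i) j) i = flipC x j := by
      rw [flipC_comm x hij, flipC_flipC]
    have hji' : (flipC x i) j = true := by rw [hji, hj]
    rw [e1, e2, flipC_flipC]
    rw [shiftL_eval_true hj ℓ, shiftL_eval_flip hj ℓ, shiftL_eval_true hji' ℓ,
      shiftL_eval_flip hji' ℓ]
    have key2 : ∀ a b c d : Fin 3,
        (((if max a b = 2 ∧ max c d = 0 then (1:ℕ) else 0)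
          + (if min a b = 2 ∧ min c d = 0 then 1 else 0))
         + ((if max c d = 2 ∧ max a b = 0 then 1 else 0)
          + (if min c d = 2 ∧ min a b = 0 then 1 else 0)))
        ≤ (((if a = 2 ∧ c = 0 then 1 else 0) + (if b = 2 ∧ d = 0 then 1 else 0))
         + ((if c = 2 ∧ a = 0 then 1 else 0) + (if d = 2 ∧ b = 0 then 1 else 0))) := by decide
    exact key2 _ _ _ _

lemma wt_flip {j : Fin n} {x} (h : x j = true) : wt (flipC x j) + 1 = wt x := by
  unfold wt
  have : univ.filter (fun i => flipC x j i = true)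
      = (univ.filter (fun i => x i = true)).erase j := by
    ext i
    by_cases hi : i = j <;>
      simp [flipC, Function.update_apply, hi, h]
  rw [this, Finset.card_erase_of_mem (by simp [h])]
  have : 0 < (univ.filter (fun i => x i = true)).card :=
    Finset.card_pos.mpr ⟨j, by simp [h]⟩
  omega

lemma phi_le (ℓ : (Fin n → Bool) → Fin 3) : Φ ℓ ≤ 2 ^ n * (2 * n) := by
  unfold Φ
  calc ∑ x, (ℓ x).val * wt x ≤ ∑ _x : Fin n → Bool, 2 * n := by
        apply Finset.sum_le_sum
        intro x _
        have h1 : (ℓ x).val ≤ 2 := by omega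
        have h2 : wt x ≤ n := by
          unfold wt
          calc (univ.filter (fun i => x i = true)).card ≤ (univ : Finset (Fin n)).card :=
                Finset.card_filter_le _ _
            _ = n := by simp
        exact Nat.mul_le_mul h1 h2
    _ = 2 ^ n * (2 * n) := by
        rw [Finset.sum_const, Finset.card_univ]
        simp [Fintype.card_fun, mul_comm]

lemma phi_lt {j : Fin n} {ℓ : (Fin n → Bool) → Fin 3} (hch : shiftL j ℓ ≠ ℓ) :
    Φ ℓ < Φ (shiftL j ℓ) := by
  unfold Φ
  rw [pair_sum j, pair_sum j (f := fun x => (shiftL j ℓ x).val * wt x)]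
  have key3 : ∀ (a b : Fin 3) (w : ℕ),
      a.val * (w + 1) + b.val * w ≤ (max a b).val * (w + 1) + (min a b).val * w := by
    intro a b w
    rcases le_total a b with h | h
    · rw [max_eq_right h, min_eq_left h]
      have := Fin.le_def.mp h
      nlinarith
    · rw [max_eq_left h, min_eq_right h]
  have key3' : ∀ (a b : Fin 3) (w : ℕ), a < b →
      a.val * (w + 1) + b.val * w < (max a b).val * (w + 1) + (min a b).val * w := by
    intro a b w h
    rw [max_eq_right h.le, min_eq_left h.le]
    have := Fin.lt_def.mp h
    nlinarith
  obtain ⟨x₀, hx₀⟩ : ∃ x, shiftL j ℓ x ≠ ℓ x := by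
    by_contra hc
    push_neg at hc
    exact hch (funext hc)
  have hw : ∃ y, y j = true ∧ ℓ y < ℓ (flipC y j) := by
    by_cases hj : x₀ j = true
    · refine ⟨x₀, hj, ?_⟩
      rw [shiftL_eval_true hj] at hx₀
      rcases le_total (ℓ (flipC x₀ j)) (ℓ x₀) with h | h
      · exact absurd (max_eq_left h) hx₀
      · rcases h.lt_or_eq with h | h
        · exact h
        · exact absurd (by rw [← h]; exact max_self _) hx₀
    · have hj' : (flipC x₀ j) j = true := by
        rw [flipC_same]; simp [Bool.not_eq_true] at hj; simp [hj]
      refine ⟨flipC x₀ j, hj', ?_⟩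
      rw [flipC_flipC]
      have := shiftL_eval_flip hj' ℓ
      rw [flipC_flipC] at this
      rw [this] at hx₀
      rw [min_comm] at hx₀
      rcases le_total (ℓ x₀) (ℓ (flipC x₀ j)) with h | h
      · exact absurd (min_eq_left h) hx₀
      · rcases h.lt_or_eq with h | h
        · exact h
        · exact absurd (by rw [h]; exact min_self _) hx₀
  obtain ⟨y, hyj, hylt⟩ := hw
  apply Finset.sum_lt_sum
  · intro x hx
    simp only [mem_filter, mem_univ, true_and] at hx
    rw [shiftL_eval_true hx, shiftL_eval_flip hx, ← wt_flip hx]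
    exact key3 _ _ _
  · refine ⟨y, by simp [hyj], ?_⟩
    rw [shiftL_eval_true hyj, shiftL_eval_flip hyj, ← wt_flip hyj]
    exact key3' _ _ _ hylt

lemma mono_of_stable {ℓ : (Fin n → Bool) → Fin 3} (hst : ∀ j, shiftL j ℓ = ℓ) :
    ∀ x y : Fin n → Bool, x ≤ y → ℓ x ≤ ℓ y := by
  have hstep : ∀ (x : Fin n → Bool) (j : Fin n), x j = true → ℓ (flipC x j) ≤ ℓ x := by
    intro x j hj
    have := congrFun (hst j) x
    rw [shiftL_eval_true hj] at this
    rcases le_total (ℓ (flipC x j)) (ℓ x) with h | h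
    · exact h
    · rw [max_eq_right h] at this; rw [this]
  suffices h : ∀ (d : ℕ) (x y : Fin n → Bool),
      (univ.filter (fun i => x i ≠ y i)).card = d → x ≤ y → ℓ x ≤ ℓ y by
    intro x y hxy
    exact h _ x y rfl hxy
  intro d
  induction d with
  | zero =>
    intro x y hd _
    have : x = y := by
      funext i
      by_contra hne
      have : i ∈ univ.filter (fun i => x i ≠ y i) := by simp [hne]
      rw [Finset.card_eq_zero] at hd
      simp [hd] at this
    rw [this]
  | succ d ih =>
    intro x y hd hxy
    have hne : (univ.filter (fun i => x i ≠ y i)).Nonempty := by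
      rw [← Finset.card_pos, hd]; omega
    obtain ⟨i, hi⟩ := hne
    simp only [mem_filter, mem_univ, true_and] at hi
    have hxi : x i = false ∧ y i = true := by
      have := hxy i
      revert this hi
      cases x i <;> cases y i <;> simp
    set z := flipC x i with hz
    have hzi : z i = true := by rw [hz, flipC_same, hxi.1]; rfl
    have h1 : ℓ x ≤ ℓ z := by
      have := hstep z i hzi
      rw [hz, flipC_flipC] at this
      exact this
    have hzy : z ≤ y := by
      intro k
      by_cases hk : k = i
      · subst hk; rw [hzi, hxi.2]
      · rw [hz, flipC_ne x hk]; exact hxy k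
    have hcard : (univ.filter (fun k => z k ≠ y k)).card = d := by
      have : univ.filter (fun k => z k ≠ y k)
          = (univ.filter (fun k => x k ≠ y k)).erase i := by
        ext k
        by_cases hk : k = i
        · subst hk; simp [hzi, hxi.2]
        · simp [hk, hz, flipC_ne x hk]
      rw [this, Finset.card_erase_of_mem (by simp [hi]), hd]; omega
    exact le_trans h1 (ih z y hcard hzy)

lemma exists_mono (k : ℕ) (ℓ : (Fin n → Bool) → Fin 3) (hk : 2 ^ n * (2 * n) - Φ ℓ ≤ k) :
    ∃ ℓ' : (Fin n → Bool) → Fin 3,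
      (∀ v, fib v ℓ' = fib v ℓ) ∧ (∀ i, Nb i ℓ' ≤ Nb i ℓ) ∧
      (∀ x y : Fin n → Bool, x ≤ y → ℓ' x ≤ ℓ' y) := by
  induction k generalizing ℓ with
  | zero =>
    by_cases hst : ∀ j, shiftL j ℓ = ℓ
    · exact ⟨ℓ, fun _ => rfl, fun _ => le_refl _, mono_of_stable hst⟩
    · push_neg at hst
      obtain ⟨j, hj⟩ := hst
      have h1 := phi_lt hj
      have h2 := phi_le (shiftL j ℓ)
      omega
  | succ k ih =>
    by_cases hst : ∀ j, shiftL j ℓ = ℓ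
    · exact ⟨ℓ, fun _ => rfl, fun _ => le_refl _, mono_of_stable hst⟩
    · push_neg at hst
      obtain ⟨j, hj⟩ := hst
      have h1 := phi_lt hj
      have h2 := phi_le (shiftL j ℓ)
      obtain ⟨ℓ', hf, hN, hm⟩ := ih (shiftL j ℓ) (by omega)
      exact ⟨ℓ', fun v => (hf v).trans (fib_shift j ℓ v),
        fun i => (hN i).trans (Nb_shift i j ℓ), hm⟩

end Shifting

open Shifting in
theorem shifting {n : ℕ} (A B W : Finset (Fin n → Bool))
    (hUnion : A ∪ B ∪ W = univ)
    (hAB : Disjoint A B) (hAW : Disjoint A W) (hBW : Disjoint B W) :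
    ∃ A' B' W' : Finset (Fin n → Bool),
      A' ∪ B' ∪ W' = univ ∧
      Disjoint A' B' ∧ Disjoint A' W' ∧ Disjoint B' W' ∧
      A'.card = A.card ∧ B'.card = B.card ∧ W'.card = W.card ∧
      IncreasingSet A' ∧ DecreasingSet B' ∧
      ∀ i : Fin n, nablaI i A' B' ≤ nablaI i A B := by
  classical
  set ℓ₀ : (Fin n → Bool) → Fin 3 := fun x => if x ∈ A then 2 else if x ∈ B then 0 else 1
    with hℓ₀
  have hA : ∀ x, ℓ₀ x = 2 ↔ x ∈ A := by
    intro x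
    rw [hℓ₀]
    by_cases hx : x ∈ A
    · simp [hx]
    · by_cases hx' : x ∈ B <;> simp [hx, hx']
  have hB : ∀ x, ℓ₀ x = 0 ↔ x ∈ B := by
    intro x
    rw [hℓ₀]
    by_cases hx : x ∈ A
    · simp [hx, Finset.disjoint_left.mp hAB hx]
    · by_cases hx' : x ∈ B <;> simp [hx, hx']
  have hW : ∀ x, ℓ₀ x = 1 ↔ x ∈ W := by
    intro x
    rw [hℓ₀]
    by_cases hx : x ∈ A
    · simp [hx, Finset.disjoint_left.mp hAW hx]
    · by_cases hx' : x ∈ B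
      · simp [hx, hx', Finset.disjoint_left.mp hBW hx']
      · have hxw : x ∈ W := by
          have : x ∈ A ∪ B ∪ W := by rw [hUnion]; exact mem_univ x
          simp only [Finset.mem_union] at this
          tauto
        simp [hx, hx', hxw]
  obtain ⟨ℓ', hfib, hNb, hmono⟩ := exists_mono (2 ^ n * (2 * n)) ℓ₀ (Nat.sub_le _ _)
  have fibA : univ.filter (fun x => ℓ₀ x = 2) = A := by
    ext x; simp [hA x]
  have fibB : univ.filter (fun x => ℓ₀ x = 0) = B := by
    ext x; simp [hB x]
  have fibW : univ.filter (fun x => ℓ₀ x = 1) = W := by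
    ext x; simp [hW x]
  refine ⟨univ.filter (fun x => ℓ' x = 2), univ.filter (fun x => ℓ' x = 0),
    univ.filter (fun x => ℓ' x = 1), ?_, ?_, ?_, ?_, ?_, ?_, ?_, ?_, ?_, ?_⟩
  · ext x
    simp only [Finset.mem_union, mem_filter, mem_univ, true_and, iff_true]
    have h := (show ∀ v : Fin 3, v = 2 ∨ v = 0 ∨ v = 1 by decide) (ℓ' x)
    tauto
  · rw [Finset.disjoint_left]
    intro a ha hb
    simp only [mem_filter, mem_univ, true_and] at ha hb
    rw [ha] at hb; exact absurd hb (by decide)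
  · rw [Finset.disjoint_left]
    intro a ha hb
    simp only [mem_filter, mem_univ, true_and] at ha hb
    rw [ha] at hb; exact absurd hb (by decide)
  · rw [Finset.disjoint_left]
    intro a ha hb
    simp only [mem_filter, mem_univ, true_and] at ha hb
    rw [ha] at hb; exact absurd hb (by decide)
  · rw [← fibA]; exact hfib 2
  · rw [← fibB]; exact hfib 0
  · rw [← fibW]; exact hfib 1
  · intro x hx y hxy
    simp only [mem_filter, mem_univ, true_and] at hx ⊢
    have := hmono x y hxy
    rw [hx] at this
    exact le_antisymm (by omega) this
  · intro x hx y hxy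
    simp only [mem_filter, mem_univ, true_and] at hx ⊢
    have := hmono y x hxy
    rw [hx] at this
    exact le_antisymm this (by omega)
  · intro i
    have e1 : nablaI i (univ.filter (fun x => ℓ' x = 2)) (univ.filter (fun x => ℓ' x = 0))
        = Nb i ℓ' := by
      unfold nablaI Nb
      congr 1
      rw [Finset.filter_filter]
      apply Finset.filter_congr
      intro x _
      simp
    have e2 : nablaI i A B = Nb i ℓ₀ := by
      unfold nablaI Nb
      congr 1
      ext x
      simp only [mem_filter, mem_univ, true_and, hA, hB]
    rw [e1, e2]
    exact hNb i
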